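/- Gluing formula for weighting vectors of a disjoint decomposition: let X ⊂ ℝⁿ be finite and Y ⊂ X nonempty with Ȳ = X \ Y. Then the restriction of w_X to Y satisfies w_X|_Y = (ζ_X/ζ_{Ȳ})⁻¹ (𝟙_Y - ζ_{Y,Ȳ} w_{Ȳ}), and the restriction to Ȳ satisfies w_X|_{Ȳ} = (ζ_X/ζ_Y)⁻¹ (𝟙_{Ȳ} - ζ_{Y,Ȳ}ᵀ w_Y). -/

import Mathlib

open Matrix Real MeasureTheory Set

-- image lemmas
lemma sq_image_Ioi : (fun t : ℝ => t ^ 2) '' Ioi 0 = Ioi 0 := by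
  ext y
  constructor
  · rintro ⟨t, ht, rfl⟩; exact pow_pos (show (0:ℝ) < t from ht) 2
  · intro hy
    exact ⟨Real.sqrt y, Real.sqrt_pos.2 hy, Real.sq_sqrt hy.le⟩

lemma div_image_Ioi {c : ℝ} (hc : 0 < c) : (fun t : ℝ => c / t) '' Ioi 0 = Ioi 0 := by
  ext y
  constructor
  · rintro ⟨t, ht, rfl⟩; exact div_pos hc ht
  · intro hy
    exact ⟨c / y, div_pos hc hy, by field_simp⟩

lemma glasser_image {c : ℝ} (hc : 0 < c) : (fun t : ℝ => t - c / t) '' Ioi 0 = univ := by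
  refine eq_univ_of_forall fun w => ?_
  have hr : 0 < Real.sqrt (w ^ 2 + 4 * c) := Real.sqrt_pos.2 (by nlinarith)
  set r := Real.sqrt (w ^ 2 + 4 * c) with hrdef
  have hr2 : r ^ 2 = w ^ 2 + 4 * c := Real.sq_sqrt (by nlinarith)
  have habs : |w| < r := by
    have : |w| = Real.sqrt (w ^ 2) := (Real.sqrt_sq_eq_abs w).symm
    rw [this]
    exact Real.sqrt_lt_sqrt (sq_nonneg w) (by nlinarith)
  have ht : 0 < (w + r) / 2 := by
    have := neg_abs_le w
    nlinarith
  refine ⟨(w + r) / 2, ht, ?_⟩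
  have hne : (w + r) / 2 ≠ 0 := ht.ne'
  have hkey : c / ((w + r) / 2) = (r - w) / 2 := by
    rw [div_eq_div_iff hne two_ne_zero]
    nlinarith
  show (w + r) / 2 - c / ((w + r) / 2) = w
  rw [hkey]
  ring

lemma glasser_half {c : ℝ} (hc : 0 < c) :
    ∫ t in Ioi (0:ℝ), rexp (-(t - c / t) ^ 2) = Real.sqrt π / 2 := by
  set h : ℝ → ℝ := fun t => rexp (-(t - c / t) ^ 2) with hh
  -- substitution w = t - c/t
  have hderiv3 : ∀ t ∈ Ioi (0:ℝ), HasDerivWithinAt (fun t : ℝ => t - c / t)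
      (1 + c / t ^ 2) (Ioi 0) t := by
    intro t ht
    have h1 : HasDerivAt (fun t : ℝ => t - c / t) (1 - c * (-(t ^ 2)⁻¹)) t := by
      simpa only [div_eq_mul_inv, Pi.sub_def] using (hasDerivAt_id' t).sub (((hasDerivAt_inv (ne_of_gt ht)).const_mul c))
    have : 1 - c * (-(t ^ 2)⁻¹) = 1 + c / t ^ 2 := by ring
    rw [this] at h1
    exact h1.hasDerivWithinAt
  have hinj3 : InjOn (fun t : ℝ => t - c / t) (Ioi 0) := by
    intro a ha b hb hab
    simp only [mem_Ioi] at ha hb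
    have : (a - b) * (1 + c / (a * b)) = 0 := by
      have hane : a ≠ 0 := ha.ne'
      have hbne : b ≠ 0 := hb.ne'
      field_simp at hab ⊢
      nlinarith [hab]
    rcases mul_eq_zero.1 this with h | h
    · linarith
    · exfalso
      have : 0 < 1 + c / (a * b) := by positivity
      linarith
  have hsub3 : ∫ w in (fun t : ℝ => t - c / t) '' Ioi 0, rexp (-w ^ 2)
      = ∫ t in Ioi (0:ℝ), |1 + c / t ^ 2| • rexp (-((t - c / t)) ^ 2) :=
    integral_image_eq_integral_abs_deriv_smul measurableSet_Ioi hderiv3 hinj3 _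
  rw [glasser_image hc] at hsub3
  have hgauss : ∫ w in (univ : Set ℝ), rexp (-w ^ 2) = Real.sqrt π := by
    rw [MeasureTheory.setIntegral_univ]
    simpa using integral_gaussian 1
  -- integrability of the big integrand
  have hF : IntegrableOn (fun t : ℝ => |1 + c / t ^ 2| • rexp (-((t - c / t)) ^ 2)) (Ioi 0) := by
    have hiff := integrableOn_image_iff_integrableOn_abs_deriv_smul measurableSet_Ioi hderiv3
      hinj3 (fun w => rexp (-w ^ 2))
    rw [glasser_image hc, integrableOn_univ] at hiff
    exact hiff.mp (by simpa using integrable_exp_neg_mul_sq (b := (1:ℝ)) one_pos)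
  -- pointwise h is continuous on Ioi 0
  have hcont : ContinuousOn h (Ioi (0:ℝ)) := by
    apply Real.continuous_exp.comp_continuousOn
    apply ContinuousOn.neg
    apply ContinuousOn.pow
    exact continuousOn_id.sub (continuousOn_const.div continuousOn_id fun t ht => ne_of_gt ht)
  have hF' : IntegrableOn (fun t : ℝ => (1 + c / t ^ 2) * h t) (Ioi 0) := by
    apply hF.congr_fun _ measurableSet_Ioi
    intro t ht
    have ht' : (0:ℝ) < t := ht
    simp only [smul_eq_mul]
    rw [abs_of_pos (by positivity)]
  have hbound : ∀ t ∈ Ioi (0:ℝ), h t ≤ (1 + c / t ^ 2) * h t ∧ (c / t ^ 2) * h t ≤ (1 + c / t ^ 2) * h t := by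
    intro t ht
    have ht' : (0:ℝ) < t := ht
    have hh0 : 0 < h t := Real.exp_pos _
    have hq : 0 < c / t ^ 2 := by positivity
    constructor <;> nlinarith
  have hFnonneg : ∀ t ∈ Ioi (0:ℝ), 0 ≤ (1 + c / t ^ 2) * h t := by
    intro t ht
    have ht' : (0:ℝ) < t := ht
    have := Real.exp_pos (-(t - c / t) ^ 2)
    positivity
  have hint_h : IntegrableOn h (Ioi 0) := by
    apply Integrable.mono hF' (hcont.aestronglyMeasurable measurableSet_Ioi)
    rw [ae_restrict_iff' measurableSet_Ioi]
    filter_upwards with t ht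
    rw [Real.norm_eq_abs, Real.norm_eq_abs, abs_of_pos (Real.exp_pos _),
      abs_of_nonneg (hFnonneg t ht)]
    exact (hbound t ht).1
  have hint_2 : IntegrableOn (fun t : ℝ => (c / t ^ 2) * h t) (Ioi 0) := by
    have hm : ContinuousOn (fun t : ℝ => (c / t ^ 2) * h t) (Ioi 0) := by
      refine ContinuousOn.mul ?_ hcont
      exact ContinuousOn.div continuousOn_const (continuousOn_id.pow 2)
        fun t ht => pow_ne_zero 2 (ne_of_gt ht)
    apply Integrable.mono hF' (hm.aestronglyMeasurable measurableSet_Ioi)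
    rw [ae_restrict_iff' measurableSet_Ioi]
    filter_upwards with t ht
    have ht' : (0:ℝ) < t := ht
    have hh0 : 0 < h t := Real.exp_pos _
    rw [Real.norm_eq_abs, Real.norm_eq_abs,
      abs_of_nonneg (mul_nonneg (div_pos hc (pow_pos ht' 2)).le hh0.le),
      abs_of_nonneg (hFnonneg t ht)]
    exact (hbound t ht).2
  -- substitution t ↦ c / t shows ∫ (c/t²) h = ∫ h
  have hderiv2 : ∀ t ∈ Ioi (0:ℝ), HasDerivWithinAt (fun t : ℝ => c / t) (-(c / t ^ 2)) (Ioi 0) t := by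
    intro t ht
    have h1 : HasDerivAt (fun t : ℝ => c / t) (c * (-(t ^ 2)⁻¹)) t := by
      simpa [div_eq_mul_inv] using (hasDerivAt_inv (ne_of_gt ht)).const_mul c
    have : c * (-(t ^ 2)⁻¹) = -(c / t ^ 2) := by ring
    rw [this] at h1
    exact h1.hasDerivWithinAt
  have hinj2 : InjOn (fun t : ℝ => c / t) (Ioi 0) := by
    intro a ha b hb hab
    have ha' : (0:ℝ) < a := ha
    have hb' : (0:ℝ) < b := hb
    rw [div_eq_div_iff ha'.ne' hb'.ne'] at hab
    exact (mul_left_cancel₀ hc.ne' hab).symm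
  have hsub2 : ∫ y in (fun t : ℝ => c / t) '' Ioi 0, h y
      = ∫ t in Ioi (0:ℝ), |(-(c / t ^ 2))| • h (c / t) :=
    integral_image_eq_integral_abs_deriv_smul measurableSet_Ioi hderiv2 hinj2 _
  rw [div_image_Ioi hc] at hsub2
  have hsub2' : ∫ t in Ioi (0:ℝ), h t = ∫ t in Ioi (0:ℝ), (c / t ^ 2) * h t := by
    rw [hsub2]
    apply MeasureTheory.setIntegral_congr_fun measurableSet_Ioi
    intro t ht
    have ht' : (0:ℝ) < t := ht
    have h1 : |(-(c / t ^ 2))| = c / t ^ 2 := by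
      rw [abs_neg, abs_of_pos (by positivity)]
    have h2 : h (c / t) = h t := by
      simp only [hh]
      congr 1
      have : c / (c / t) = t := by field_simp
      rw [this]
      ring
    simp only [smul_eq_mul]
    rw [h1, h2]
  -- combine
  have hsplit : (fun t : ℝ => (1 + c / t ^ 2) * h t)
      = fun t : ℝ => h t + (c / t ^ 2) * h t := by
    funext t; ring
  have htotal : Real.sqrt π = ∫ t in Ioi (0:ℝ), (1 + c / t ^ 2) * h t := by
    rw [← hgauss, hsub3]
    apply MeasureTheory.setIntegral_congr_fun measurableSet_Ioi
    intro t ht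
    have ht' : (0:ℝ) < t := ht
    simp only [smul_eq_mul]
    rw [abs_of_pos (by positivity)]
  rw [hsplit, MeasureTheory.integral_add hint_h hint_2, ← hsub2'] at htotal
  linarith

lemma rpow_half_sub_one {u : ℝ} (hu : 0 < u) : u ^ ((1/2:ℝ) - 1) = (Real.sqrt u)⁻¹ := by
  rw [show (1/2:ℝ) - 1 = -(1/2) by ring, Real.rpow_neg hu.le, Real.sqrt_eq_rpow]

lemma subord_integrableOn (s : ℝ) :
    IntegrableOn (fun u : ℝ => (Real.sqrt u)⁻¹ * rexp (-u - s ^ 2 / (4 * u))) (Ioi 0) := by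
  have hg : IntegrableOn (fun x : ℝ => rexp (-x) * x ^ ((1/2 : ℝ) - 1)) (Ioi 0) :=
    Real.GammaIntegral_convergent one_half_pos
  refine Integrable.mono hg ?_ ?_
  · refine (ContinuousOn.mul ?_ ?_).aestronglyMeasurable measurableSet_Ioi
    · exact ContinuousOn.inv₀ Real.continuous_sqrt.continuousOn
        fun u hu => (Real.sqrt_pos.2 hu).ne'
    · apply Real.continuous_exp.comp_continuousOn
      apply ContinuousOn.sub continuousOn_id.neg
      exact ContinuousOn.div continuousOn_const (continuousOn_const.mul continuousOn_id)
        fun u hu => ne_of_gt (by have : (0:ℝ) < u := hu; positivity)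
  · rw [ae_restrict_iff' measurableSet_Ioi]
    filter_upwards with u hu
    have hu' : (0:ℝ) < u := hu
    have hsq : (0:ℝ) < Real.sqrt u := Real.sqrt_pos.2 hu'
    rw [Real.norm_eq_abs, Real.norm_eq_abs, abs_of_nonneg (by positivity),
      abs_of_nonneg (by positivity)]
    rw [rpow_half_sub_one hu']
    have h2 : rexp (-u - s ^ 2 / (4 * u)) ≤ rexp (-u) := by
      apply Real.exp_le_exp.2
      have : (0:ℝ) ≤ s ^ 2 / (4 * u) := by positivity
      linarith
    calc (Real.sqrt u)⁻¹ * rexp (-u - s ^ 2 / (4 * u))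
        ≤ (Real.sqrt u)⁻¹ * rexp (-u) := mul_le_mul_of_nonneg_left h2 (inv_nonneg.2 hsq.le)
      _ = rexp (-u) * (Real.sqrt u)⁻¹ := mul_comm _ _

lemma subordination {s : ℝ} (hs : 0 ≤ s) :
    ∫ u in Ioi (0:ℝ), (Real.sqrt u)⁻¹ * rexp (-u - s ^ 2 / (4 * u))
      = Real.sqrt π * rexp (-s) := by
  rcases eq_or_lt_of_le hs with rfl | hs'
  · rw [neg_zero, Real.exp_zero, mul_one]
    have : ∫ u in Ioi (0:ℝ), (Real.sqrt u)⁻¹ * rexp (-u - (0:ℝ) ^ 2 / (4 * u))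
        = ∫ x in Ioi (0:ℝ), rexp (-x) * x ^ ((1/2:ℝ) - 1) := by
      apply MeasureTheory.setIntegral_congr_fun measurableSet_Ioi
      intro u hu
      have hu' : (0:ℝ) < u := hu
      simp only []
      rw [rpow_half_sub_one hu']
      rw [show -u - (0:ℝ) ^ 2 / (4 * u) = -u by norm_num]
      ring
    rw [this, ← Real.Gamma_eq_integral one_half_pos, Real.Gamma_one_half_eq]
  · set c : ℝ := s / 2 with hcdef
    have hc : 0 < c := by positivity
    have hderiv1 : ∀ t ∈ Ioi (0:ℝ), HasDerivWithinAt (fun t : ℝ => t ^ 2) (2 * t) (Ioi 0) t := by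
      intro t ht
      have := (hasDerivAt_pow 2 t).hasDerivWithinAt (s := Ioi 0)
      simpa using this
    have hinj1 : InjOn (fun t : ℝ => t ^ 2) (Ioi 0) := by
      intro a ha b hb hab
      have ha' : (0:ℝ) < a := ha
      have hb' : (0:ℝ) < b := hb
      have hab' : a ^ 2 = b ^ 2 := hab
      calc a = Real.sqrt (a ^ 2) := (Real.sqrt_sq ha'.le).symm
      _ = Real.sqrt (b ^ 2) := by rw [hab']
      _ = b := Real.sqrt_sq hb'.le
    have hsub1 := integral_image_eq_integral_abs_deriv_smul measurableSet_Ioi hderiv1 hinj1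
      (fun u => (Real.sqrt u)⁻¹ * rexp (-u - s ^ 2 / (4 * u)))
    rw [sq_image_Ioi] at hsub1
    rw [hsub1]
    have hptw : ∀ t ∈ Ioi (0:ℝ),
        |2 * t| • ((Real.sqrt (t ^ 2))⁻¹ * rexp (-t ^ 2 - s ^ 2 / (4 * t ^ 2)))
          = (2 * rexp (-s)) * rexp (-(t - c / t) ^ 2) := by
      intro t ht
      have ht' : (0:ℝ) < t := ht
      have hexp : -t ^ 2 - s ^ 2 / (4 * t ^ 2) = -(t - c / t) ^ 2 + -s := by
        rw [hcdef]
        field_simp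
        ring
      rw [smul_eq_mul, Real.sqrt_sq ht'.le, abs_of_pos (by positivity), hexp, Real.exp_add]
      field_simp
    rw [MeasureTheory.setIntegral_congr_fun measurableSet_Ioi hptw,
      MeasureTheory.integral_const_mul, glasser_half hc]
    ring


section Sep
variable {F : Type*} [NormedAddCommGroup F] [InnerProductSpace ℝ F]

lemma exists_sep (S : Finset F) (hS : ∀ z ∈ S, z ≠ (0:F)) :
    ∃ y : F, ∀ z ∈ S, (inner ℝ y z : ℝ) ≠ 0 := by
  classical
  induction S using Finset.induction_on with
  | empty => exact ⟨0, fun z hz => absurd hz (Finset.notMem_empty z)⟩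
  | @insert a S ha ih =>
    obtain ⟨y, hy⟩ := ih fun z hz => hS z (Finset.mem_insert_of_mem hz)
    have haz : a ≠ 0 := hS a (Finset.mem_insert_self a S)
    have hinner : (inner ℝ a a : ℝ) ≠ 0 := fun h => haz (inner_self_eq_zero.1 h)
    set B : Finset ℝ :=
      insert (-(inner ℝ y a : ℝ) / (inner ℝ a a : ℝ))
        (S.image fun z => -(inner ℝ y z : ℝ) / (inner ℝ a z : ℝ)) with hB
    obtain ⟨ε, hε⟩ := Infinite.exists_notMem_finset B
    refine ⟨y + ε • a, fun z hz => ?_⟩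
    rw [inner_add_left, real_inner_smul_left]
    rcases Finset.mem_insert.1 hz with rfl | hzS
    · intro h
      apply hε
      have hεeq : ε = -(inner ℝ y z : ℝ) / (inner ℝ z z : ℝ) := by
        rw [eq_div_iff hinner]; linarith
      rw [hB, hεeq]
      exact Finset.mem_insert_self _ _
    · by_cases hza : (inner ℝ a z : ℝ) = 0
      · rw [hza, mul_zero, add_zero]; exact hy z hzS
      · intro h
        apply hε
        have hεeq : ε = -(inner ℝ y z : ℝ) / (inner ℝ a z : ℝ) := by
          rw [eq_div_iff hza]; linarith
        rw [hB, hεeq]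
        exact Finset.mem_insert_of_mem (Finset.mem_image_of_mem _ hzS)

lemma exists_sep_inj {ι : Type*} [Fintype ι] (x : ι → F) (hx : Function.Injective x) :
    ∃ y : F, Function.Injective fun i => (inner ℝ y (x i) : ℝ) := by
  classical
  obtain ⟨y, hy⟩ := exists_sep
    ((Finset.univ.filter fun p : ι × ι => p.1 ≠ p.2).image fun p => x p.1 - x p.2)
    (by
      intro z hz
      obtain ⟨p, hp, rfl⟩ := Finset.mem_image.1 hz
      exact sub_ne_zero.2 (fun h => (Finset.mem_filter.1 hp).2 (hx h)))
  refine ⟨y, fun i j hij => ?_⟩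
  by_contra hne
  have hmem : x i - x j ∈
      ((Finset.univ.filter fun p : ι × ι => p.1 ≠ p.2).image fun p => x p.1 - x p.2) :=
    Finset.mem_image.2 ⟨(i, j), Finset.mem_filter.2 ⟨Finset.mem_univ _, hne⟩, rfl⟩
  have := hy _ hmem
  rw [inner_sub_right] at this
  have hij' : (inner ℝ y (x i) : ℝ) = inner ℝ y (x j) := hij
  exact this (by rw [hij']; ring)

end Sep

lemma sum_pow_eq_zero {ι : Type*} [Fintype ι] [DecidableEq ι] {z w : ι → ℝ}
    (hz : Function.Injective z) (h : ∀ p : ℕ, ∑ i, w i * z i ^ p = 0) : w = 0 := by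
  classical
  set m := Fintype.card ι with hm
  set e := (Fintype.equivFin ι).symm with he
  set A : Matrix (Fin m) (Fin m) ℝ := Matrix.of fun p i => z (e i) ^ (p : ℕ) with hA
  have hAt : A = (Matrix.vandermonde fun i => z (e i))ᵀ := by
    ext p i
    rfl
  have hdet : A.det ≠ 0 := by
    rw [hAt, Matrix.det_transpose, Matrix.det_vandermonde]
    rw [Finset.prod_ne_zero_iff]
    intro i _
    rw [Finset.prod_ne_zero_iff]
    intro j hj
    have hij : j ≠ i := (Finset.mem_Ioi.1 hj).ne'
    exact sub_ne_zero.2 fun hh => hij (e.injective (hz hh))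
  have hmv : A *ᵥ (fun i => w (e i)) = 0 := by
    funext p
    simp only [Matrix.mulVec, dotProduct, hA, Matrix.of_apply, Pi.zero_apply]
    calc ∑ i, z (e i) ^ (p : ℕ) * w (e i)
        = ∑ i, w (e i) * z (e i) ^ (p : ℕ) := Finset.sum_congr rfl fun i _ => mul_comm _ _
      _ = ∑ j, w j * z j ^ (p : ℕ) := Equiv.sum_comp e fun j => w j * z j ^ (p : ℕ)
      _ = 0 := h p
  have hzero : (fun i => w (e i)) = 0 := by
    have h2 := congrArg (fun u => A⁻¹ *ᵥ u) hmv
    simpa [Matrix.mulVec_mulVec, Matrix.nonsing_inv_mul A (isUnit_iff_ne_zero.2 hdet),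
      Matrix.one_mulVec, Matrix.mulVec_zero] using h2
  funext j
  have := congrFun hzero (e.symm j)
  simpa using this

lemma bump_exists {F : Type*} [NormedAddCommGroup F] [InnerProductSpace ℝ F]
    {ι : Type*} [Fintype ι] [DecidableEq ι] (x : ι → F) (hx : Function.Injective x)
    {v : ι → ℝ} (hv : v ≠ 0) {b : ℝ} (hb : 0 < b) :
    ∃ y : F, ∑ i, v i * rexp (-b * ‖y - x i‖ ^ 2) ≠ 0 := by
  by_contra hall
  push_neg at hall
  set w : ι → ℝ := fun i => v i * rexp (-b * ‖x i‖ ^ 2) with hw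
  have hclaim : ∀ y : F, ∑ i, w i * rexp (2 * b * (inner ℝ y (x i) : ℝ)) = 0 := by
    intro y
    have h0 := hall y
    have hterm : ∀ i, v i * rexp (-b * ‖y - x i‖ ^ 2)
        = rexp (-b * ‖y‖ ^ 2) * (w i * rexp (2 * b * (inner ℝ y (x i) : ℝ))) := by
      intro i
      have hn : ‖y - x i‖ ^ 2 = ‖y‖ ^ 2 - 2 * (inner ℝ y (x i) : ℝ) + ‖x i‖ ^ 2 :=
        norm_sub_sq_real y (x i)
      rw [hn, show -b * (‖y‖ ^ 2 - 2 * (inner ℝ y (x i) : ℝ) + ‖x i‖ ^ 2)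
        = (-b * ‖y‖ ^ 2) + ((-b * ‖x i‖ ^ 2) + (2 * b * (inner ℝ y (x i) : ℝ))) by ring,
        Real.exp_add, Real.exp_add, hw]
      ring
    rw [Finset.sum_congr rfl fun i _ => hterm i, ← Finset.mul_sum] at h0
    rcases mul_eq_zero.1 h0 with h | h
    · exact absurd h (Real.exp_ne_zero _)
    · exact h
  obtain ⟨y₀, hy₀⟩ := exists_sep_inj x hx
  set z : ι → ℝ := fun i => rexp (2 * b * (inner ℝ y₀ (x i) : ℝ)) with hz
  have hzinj : Function.Injective z := by
    intro i j hij
    apply hy₀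
    have h1 : 2 * b * (inner ℝ y₀ (x i) : ℝ) = 2 * b * (inner ℝ y₀ (x j) : ℝ) := Real.exp_injective hij
    have h2b : (2 : ℝ) * b ≠ 0 := by positivity
    exact mul_left_cancel₀ h2b h1
  have hpow : ∀ p : ℕ, ∑ i, w i * z i ^ p = 0 := by
    intro p
    have hy := hclaim ((p : ℝ) • y₀)
    rw [← hy]
    apply Finset.sum_congr rfl
    intro i _
    congr 1
    rw [hz, real_inner_smul_left, ← Real.exp_nat_mul]
    congr 1
    ring
  have hw0 : w = 0 := sum_pow_eq_zero hzinj hpow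
  apply hv
  funext i
  have hwi := congrFun hw0 i
  simp only [hw, Pi.zero_apply] at hwi
  rcases mul_eq_zero.1 hwi with h | h
  · exact h
  · exact absurd h (Real.exp_ne_zero _)

section Gauss
variable {n : ℕ}

lemma gauss_integrable {b : ℝ} (hb : 0 < b) :
    Integrable (fun y : EuclideanSpace ℝ (Fin n) => rexp (-b * ‖y‖ ^ 2)) := by
  have h := GaussianFourier.integrable_cexp_neg_mul_sq_norm_add (V := EuclideanSpace ℝ (Fin n))
    (b := (b : ℂ)) (by simpa using hb) 0 (0 : EuclideanSpace ℝ (Fin n))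
  have h2 := h.norm
  refine h2.congr (Filter.Eventually.of_forall fun y => ?_)
  simp [Complex.norm_exp, ← Complex.ofReal_pow]

lemma gauss_product {b : ℝ} (hb : 0 < b) (x x' : EuclideanSpace ℝ (Fin n)) :
    (fun y : EuclideanSpace ℝ (Fin n) => rexp (-b * ‖y - x‖ ^ 2) * rexp (-b * ‖y - x'‖ ^ 2))
      = fun y : EuclideanSpace ℝ (Fin n) =>
        rexp (-(b/2) * ‖x - x'‖ ^ 2) * rexp (-(2*b) * ‖y - (1/2 : ℝ) • (x + x')‖ ^ 2) := by
  funext y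
  rw [← Real.exp_add, ← Real.exp_add]
  congr 1
  have h1 := parallelogram_law_with_norm ℝ (y - x) (y - x')
  have h2 : (y - x) + (y - x') = (2:ℝ) • (y - (1/2 : ℝ) • (x + x')) := by module
  have h3 : (y - x) - (y - x') = x' - x := by abel
  rw [h2, h3, norm_smul, norm_sub_rev] at h1
  simp only [Real.norm_ofNat] at h1
  rw [norm_sub_rev ((1/2 : ℝ) • (x + x')) y, norm_sub_rev x' x] at h1
  linear_combination (b/2) * h1

lemma gram {b : ℝ} (hb : 0 < b) (x x' : EuclideanSpace ℝ (Fin n)) :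
    ∫ y : EuclideanSpace ℝ (Fin n), rexp (-b * ‖y - x‖ ^ 2) * rexp (-b * ‖y - x'‖ ^ 2)
      = (∫ y : EuclideanSpace ℝ (Fin n), rexp (-(2*b) * ‖y‖ ^ 2))
          * rexp (-(b/2) * ‖x - x'‖ ^ 2) := by
  rw [gauss_product hb x x', MeasureTheory.integral_const_mul,
    integral_sub_right_eq_self (fun y : EuclideanSpace ℝ (Fin n) => rexp (-(2*b) * ‖y‖ ^ 2))
      ((1/2 : ℝ) • (x + x'))]
  ring

lemma gram_integrable {b : ℝ} (hb : 0 < b) (x x' : EuclideanSpace ℝ (Fin n)) :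
    Integrable (fun y : EuclideanSpace ℝ (Fin n) =>
      rexp (-b * ‖y - x‖ ^ 2) * rexp (-b * ‖y - x'‖ ^ 2)) := by
  rw [gauss_product hb x x']
  exact ((gauss_integrable (by positivity : (0:ℝ) < 2*b)).comp_sub_right _).const_mul _

lemma gaussQF_pos {ι : Type*} [Fintype ι] [DecidableEq ι]
    (x : ι → EuclideanSpace ℝ (Fin n)) (hx : Function.Injective x)
    {v : ι → ℝ} (hv : v ≠ 0) {b : ℝ} (hb : 0 < b) :
    0 < ∑ i, ∑ j, v i * v j * rexp (-b * ‖x i - x j‖ ^ 2) := by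
  set c : ℝ := 2 * b with hc
  have hc0 : 0 < c := by positivity
  set f : ι → EuclideanSpace ℝ (Fin n) → ℝ := fun i y => rexp (-c * ‖y - x i‖ ^ 2) with hf
  set K := ∫ y : EuclideanSpace ℝ (Fin n), rexp (-(2*c) * ‖y‖ ^ 2) with hK
  have hKpos : 0 < K := by
    rw [hK, GaussianFourier.integral_rexp_neg_mul_sq_norm (by positivity)]
    positivity
  have hgram : ∀ i j, ∫ y : EuclideanSpace ℝ (Fin n), f i y * f j y
      = K * rexp (-b * ‖x i - x j‖ ^ 2) := by
    intro i j
    have := gram hc0 (x i) (x j)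
    rw [show c / 2 = b by rw [hc]; ring] at this
    exact this
  have hint : ∀ i j, Integrable (fun y : EuclideanSpace ℝ (Fin n) => f i y * f j y) :=
    fun i j => gram_integrable hc0 _ _
  set g : EuclideanSpace ℝ (Fin n) → ℝ := fun y => ∑ i, v i * f i y with hg
  have hexpand : (fun y : EuclideanSpace ℝ (Fin n) => g y ^ 2)
      = fun y => ∑ i, ∑ j, (v i * v j) * (f i y * f j y) := by
    funext y
    rw [hg]
    simp only [sq, Finset.sum_mul_sum]
    exact Finset.sum_congr rfl fun i _ => Finset.sum_congr rfl fun j _ => by ring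
  have hgint : Integrable (fun y : EuclideanSpace ℝ (Fin n) => g y ^ 2) := by
    rw [hexpand]
    exact integrable_finset_sum _ fun i _ =>
      integrable_finset_sum _ fun j _ => (hint i j).const_mul _
  have hsum : ∑ i, ∑ j, v i * v j * rexp (-b * ‖x i - x j‖ ^ 2)
      = K⁻¹ * ∫ y : EuclideanSpace ℝ (Fin n), g y ^ 2 := by
    have h1 : ∫ y : EuclideanSpace ℝ (Fin n), g y ^ 2
        = ∑ i, ∑ j, (v i * v j) * (K * rexp (-b * ‖x i - x j‖ ^ 2)) := by
      rw [hexpand, MeasureTheory.integral_finset_sum _ (fun i _ =>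
        integrable_finset_sum _ fun j _ => (hint i j).const_mul _)]
      refine Finset.sum_congr rfl fun i _ => ?_
      rw [MeasureTheory.integral_finset_sum _ fun j _ => (hint i j).const_mul _]
      refine Finset.sum_congr rfl fun j _ => ?_
      rw [MeasureTheory.integral_const_mul, hgram i j]
    have h2 : ∑ i, ∑ j, (v i * v j) * (K * rexp (-b * ‖x i - x j‖ ^ 2))
        = K * ∑ i, ∑ j, v i * v j * rexp (-b * ‖x i - x j‖ ^ 2) := by
      rw [Finset.mul_sum]
      refine Finset.sum_congr rfl fun i _ => ?_
      rw [Finset.mul_sum]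
      exact Finset.sum_congr rfl fun j _ => by ring
    rw [h1, h2, ← mul_assoc, inv_mul_cancel₀ hKpos.ne', one_mul]
  rw [hsum]
  refine mul_pos (inv_pos.2 hKpos) ?_
  obtain ⟨y₀, hy₀⟩ := bump_exists x hx hv hc0
  have hgcont : Continuous g := by
    rw [hg]
    refine continuous_finset_sum _ fun i _ => Continuous.mul continuous_const ?_
    exact Real.continuous_exp.comp
      (continuous_const.mul ((continuous_id.sub continuous_const).norm.pow 2))
  rw [MeasureTheory.integral_pos_iff_support_of_nonneg (fun y => sq_nonneg (g y)) hgint]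
  have hopen : IsOpen (Function.support fun y : EuclideanSpace ℝ (Fin n) => g y ^ 2) := by
    have hs : (Function.support fun y : EuclideanSpace ℝ (Fin n) => g y ^ 2)
        = (fun y : EuclideanSpace ℝ (Fin n) => g y ^ 2) ⁻¹' ({0}ᶜ) := by
      ext y
      simp [Function.mem_support]
    rw [hs]
    exact IsOpen.preimage (hgcont.pow 2) isOpen_compl_singleton
  exact hopen.measure_pos volume ⟨y₀, by
    simp only [Function.mem_support]
    exact pow_ne_zero 2 hy₀⟩

end Gauss

theorem expDist_posDef {ι : Type*} [Fintype ι] [DecidableEq ι] {n : ℕ}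
    (x : ι → EuclideanSpace ℝ (Fin n)) (hx : Function.Injective x) :
    (Matrix.of fun i j => Real.exp (-dist (x i) (x j))).PosDef := by
  rw [Matrix.posDef_iff_dotProduct_mulVec]
  constructor
  · show (Matrix.of fun i j => Real.exp (-dist (x i) (x j)))ᴴ = _
    ext i j
    simp [dist_comm]
  · intro v hv
    have hquad : dotProduct (star v) ((Matrix.of fun i j => Real.exp (-dist (x i) (x j))) *ᵥ v)
        = ∑ i, ∑ j, v i * v j * rexp (-dist (x i) (x j)) := by
      simp only [dotProduct, Matrix.mulVec, Matrix.of_apply, star_trivial, Finset.mul_sum]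
      exact Finset.sum_congr rfl fun i _ => Finset.sum_congr rfl fun j _ => by ring
    rw [hquad]
    have hsπ : (0:ℝ) < Real.sqrt π := Real.sqrt_pos.2 Real.pi_pos
    -- each entry via subordination
    have hid : ∀ i j, v i * v j * rexp (-dist (x i) (x j))
        = (Real.sqrt π)⁻¹ * ∫ u in Ioi (0:ℝ),
            (v i * v j) * ((Real.sqrt u)⁻¹ * rexp (-u - dist (x i) (x j) ^ 2 / (4 * u))) := by
      intro i j
      rw [MeasureTheory.integral_const_mul, subordination dist_nonneg]
      field_simp
    rw [Finset.sum_congr rfl fun i _ => Finset.sum_congr rfl fun j _ => hid i j]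
    simp_rw [← Finset.mul_sum]
    have hFint : ∀ i j : ι, IntegrableOn (fun u : ℝ =>
        (v i * v j) * ((Real.sqrt u)⁻¹ * rexp (-u - dist (x i) (x j) ^ 2 / (4 * u)))) (Ioi 0) :=
      fun i j => (subord_integrableOn (dist (x i) (x j))).const_mul _
    have hswap : ∑ i, ∑ j, ∫ u in Ioi (0:ℝ),
          (v i * v j) * ((Real.sqrt u)⁻¹ * rexp (-u - dist (x i) (x j) ^ 2 / (4 * u)))
        = ∫ u in Ioi (0:ℝ), ∑ i, ∑ j,
            (v i * v j) * ((Real.sqrt u)⁻¹ * rexp (-u - dist (x i) (x j) ^ 2 / (4 * u))) := by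
      rw [MeasureTheory.integral_finset_sum _ fun i _ =>
        integrable_finset_sum _ fun j _ => hFint i j]
      exact Finset.sum_congr rfl fun i _ =>
        (MeasureTheory.integral_finset_sum _ fun j _ => hFint i j).symm
    rw [hswap]
    refine mul_pos (inv_pos.2 hsπ) ?_
    set Φ : ℝ → ℝ := fun u => ∑ i, ∑ j,
      (v i * v j) * ((Real.sqrt u)⁻¹ * rexp (-u - dist (x i) (x j) ^ 2 / (4 * u))) with hΦ
    have hΦpos : ∀ u ∈ Ioi (0:ℝ), 0 < Φ u := by
      intro u hu
      have hu' : (0:ℝ) < u := hu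
      have hkey : ∀ i j : ι, (v i * v j) * ((Real.sqrt u)⁻¹ * rexp (-u - dist (x i) (x j) ^ 2 / (4 * u)))
          = ((Real.sqrt u)⁻¹ * rexp (-u)) * (v i * v j * rexp (-(1/(4*u)) * ‖x i - x j‖ ^ 2)) := by
        intro i j
        rw [show -u - dist (x i) (x j) ^ 2 / (4 * u)
            = -u + (-(1/(4*u)) * ‖x i - x j‖ ^ 2) by rw [dist_eq_norm]; field_simp; ring,
          Real.exp_add]
        ring
      rw [hΦ]
      simp only []
      rw [Finset.sum_congr rfl fun i _ => Finset.sum_congr rfl fun j _ => hkey i j]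
      simp_rw [← Finset.mul_sum]
      refine mul_pos (mul_pos (inv_pos.2 (Real.sqrt_pos.2 hu')) (Real.exp_pos _)) ?_
      exact gaussQF_pos x hx hv (by positivity)
    have hΦint : IntegrableOn Φ (Ioi 0) :=
      integrable_finset_sum _ fun i _ => integrable_finset_sum _ fun j _ => hFint i j
    rw [MeasureTheory.integral_pos_iff_support_of_nonneg_ae
      ((ae_restrict_iff' measurableSet_Ioi).2 (Filter.Eventually.of_forall
        fun u hu => (hΦpos u hu).le)) hΦint]
    calc (0:ENNReal) < (MeasureTheory.volume.restrict (Ioi (0:ℝ))) (Ioi 0) := by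
          rw [MeasureTheory.Measure.restrict_apply measurableSet_Ioi, Set.inter_self,
            Real.volume_Ioi]
          exact ENNReal.zero_lt_top
      _ ≤ (MeasureTheory.volume.restrict (Ioi (0:ℝ))) (Function.support Φ) :=
          MeasureTheory.measure_mono fun u hu => (hΦpos u hu).ne'

theorem weighting_gluing (n k l : ℕ)
    (q : Fin k ⊕ Fin l → EuclideanSpace ℝ (Fin n)) (hq : Function.Injective q) :
    let ζX : Matrix (Fin k ⊕ Fin l) (Fin k ⊕ Fin l) ℝ :=
      Matrix.of fun a b => Real.exp (-dist (q a) (q b))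
    let ζY : Matrix (Fin k) (Fin k) ℝ :=
      Matrix.of fun i j => Real.exp (-dist (q (Sum.inl i)) (q (Sum.inl j)))
    let B : Matrix (Fin k) (Fin l) ℝ :=
      Matrix.of fun i j => Real.exp (-dist (q (Sum.inl i)) (q (Sum.inr j)))
    let ζYbar : Matrix (Fin l) (Fin l) ℝ :=
      Matrix.of fun i j => Real.exp (-dist (q (Sum.inr i)) (q (Sum.inr j)))
    let wX := ζX⁻¹ *ᵥ fun _ => (1 : ℝ)
    let wY := ζY⁻¹ *ᵥ fun _ => (1 : ℝ)
    let wYbar := ζYbar⁻¹ *ᵥ fun _ => (1 : ℝ)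
    (fun i => wX (Sum.inl i))
        = (ζY - B * ζYbar⁻¹ * Bᵀ)⁻¹ *ᵥ ((fun _ => (1 : ℝ)) - B *ᵥ wYbar) ∧
    (fun j => wX (Sum.inr j))
        = (ζYbar - Bᵀ * ζY⁻¹ * B)⁻¹ *ᵥ ((fun _ => (1 : ℝ)) - Bᵀ *ᵥ wY) := by
  intro ζX ζY B ζYbar wX wY wYbar
  have hXpd : ζX.PosDef := expDist_posDef q hq
  have hYpd : ζY.PosDef := expDist_posDef (q ∘ Sum.inl) (hq.comp Sum.inl_injective)
  have hYbpd : ζYbar.PosDef := expDist_posDef (q ∘ Sum.inr) (hq.comp Sum.inr_injective)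
  have hdX : ζX.det ≠ 0 := hXpd.det_pos.ne'
  have hdY : ζY.det ≠ 0 := hYpd.det_pos.ne'
  have hdYb : ζYbar.det ≠ 0 := hYbpd.det_pos.ne'
  haveI iY : Invertible ζY := ζY.invertibleOfIsUnitDet (isUnit_iff_ne_zero.2 hdY)
  haveI iYb : Invertible ζYbar := ζYbar.invertibleOfIsUnitDet (isUnit_iff_ne_zero.2 hdYb)
  have hblock : ζX = Matrix.fromBlocks ζY B Bᵀ ζYbar := by
    ext a b
    cases a <;> cases b <;> simp [ζX, ζY, B, ζYbar, Matrix.fromBlocks, dist_comm]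
  -- Schur complements have nonzero det
  have hS1 : (ζY - B * ζYbar⁻¹ * Bᵀ).det ≠ 0 := by
    have := Matrix.det_fromBlocks₂₂ ζY B Bᵀ ζYbar
    rw [Matrix.invOf_eq_nonsing_inv] at this
    rw [hblock, this] at hdX
    exact fun h => hdX (by rw [h, mul_zero])
  have hS2 : (ζYbar - Bᵀ * ζY⁻¹ * B).det ≠ 0 := by
    have := Matrix.det_fromBlocks₁₁ ζY B Bᵀ ζYbar
    rw [Matrix.invOf_eq_nonsing_inv] at this
    rw [hblock, this] at hdX
    exact fun h => hdX (by rw [h, mul_zero])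
  -- the defining equation of wX
  have hwX : ζX *ᵥ wX = fun _ => (1 : ℝ) := by
    show ζX *ᵥ (ζX⁻¹ *ᵥ _) = _
    rw [Matrix.mulVec_mulVec, Matrix.mul_nonsing_inv _ (isUnit_iff_ne_zero.2 hdX), Matrix.one_mulVec]
  set a : Fin k → ℝ := fun i => wX (Sum.inl i) with ha
  set bb : Fin l → ℝ := fun j => wX (Sum.inr j) with hbb
  have hwXe : wX = Sum.elim a bb := by ext c; cases c <;> rfl
  rw [hwXe, hblock, Matrix.fromBlocks_mulVec] at hwX
  have eq1 : ζY *ᵥ a + B *ᵥ bb = fun _ => (1 : ℝ) := funext fun i => congrFun hwX (Sum.inl i)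
  have eq2 : Bᵀ *ᵥ a + ζYbar *ᵥ bb = fun _ => (1 : ℝ) := funext fun j => congrFun hwX (Sum.inr j)
  constructor
  · have key : (ζY - B * ζYbar⁻¹ * Bᵀ) *ᵥ a = (fun _ => (1:ℝ)) - B *ᵥ wYbar := by
      have h2 : Bᵀ *ᵥ a = (fun _ => (1:ℝ)) - ζYbar *ᵥ bb := by
        rw [← eq2]; abel
      rw [Matrix.sub_mulVec, ← Matrix.mulVec_mulVec, ← Matrix.mulVec_mulVec, h2,
        Matrix.mulVec_sub, Matrix.mulVec_mulVec, Matrix.nonsing_inv_mul _ (isUnit_iff_ne_zero.2 hdYb),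
        Matrix.one_mulVec]
      show _ = _
      have : ζY *ᵥ a = (fun _ => (1:ℝ)) - B *ᵥ bb := by rw [← eq1]; abel
      rw [this]
      show _ - B *ᵥ (wYbar - bb) = _
      rw [Matrix.mulVec_sub]
      abel
    rw [← key, Matrix.mulVec_mulVec, Matrix.nonsing_inv_mul _ (isUnit_iff_ne_zero.2 hS1), Matrix.one_mulVec]
  · have key : (ζYbar - Bᵀ * ζY⁻¹ * B) *ᵥ bb = (fun _ => (1:ℝ)) - Bᵀ *ᵥ wY := by
      have h1 : B *ᵥ bb = (fun _ => (1:ℝ)) - ζY *ᵥ a := by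
        rw [← eq1]; abel
      rw [Matrix.sub_mulVec, ← Matrix.mulVec_mulVec, ← Matrix.mulVec_mulVec, h1,
        Matrix.mulVec_sub, Matrix.mulVec_mulVec, Matrix.nonsing_inv_mul _ (isUnit_iff_ne_zero.2 hdY),
        Matrix.one_mulVec]
      have : ζYbar *ᵥ bb = (fun _ => (1:ℝ)) - Bᵀ *ᵥ a := by rw [← eq2]; abel
      rw [this]
      show _ - Bᵀ *ᵥ (wY - a) = _
      rw [Matrix.mulVec_sub]
      abel
    rw [← key, Matrix.mulVec_mulVec, Matrix.nonsing_inv_mul _ (isUnit_iff_ne_zero.2 hS2), Matrix.one_mulVec]
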